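/- The Shapley–Taylor pair-interaction index for the KNN valuation function satisfies φ_{ij}(u) = (2/n)·Σ_{s=k-1}^{n-2} (1/C(n-1,s))·Σ_{S⊆N∖{i,j}, |S|=s} [u(S∪{i,j}) - u(S∪{i}) - u(S∪{j}) + u(S)], i.e., the terms with |S| ≤ k-2 in the defining sum vanish. -/

import Mathlib

open Finset

/-- KNN valuation function: fraction (out of k) of label matches among the
min(k,|S|) smallest-index (closest) elements of S. `m i` says whether train
point i's label matches the test label. -/
noncomputable def knnVal (k : ℕ) (m : ℕ → Bool) (S : Finset ℕ) : ℝ :=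
  (((S.sort (· ≤ ·)).take k).countP m : ℝ) / k

/-- Discrete second difference of a set function. -/
noncomputable def secondDiff (u : Finset ℕ → ℝ) (S : Finset ℕ) (i j : ℕ) : ℝ :=
  u (S ∪ {i, j}) - u (S ∪ {i}) - u (S ∪ {j}) + u S

/-- Shapley–Taylor pair-interaction index on N = {1,…,n}. -/
noncomputable def sti (n : ℕ) (u : Finset ℕ → ℝ) (i j : ℕ) : ℝ :=
  (2 / n) * ∑ S ∈ ((Finset.Icc 1 n) \ {i, j}).powerset,
    (1 / ((n - 1).choose S.card) : ℝ) * secondDiff u S i j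

lemma countP_toList (m : ℕ → Bool) (T : Finset ℕ) :
    T.toList.countP m = (T.filter (fun x => m x)).card := by
  have h : T.val = ↑T.toList := (Finset.coe_toList T).symm
  have : Multiset.countP (fun x => m x) T.val = T.toList.countP m := by
    rw [h, Multiset.coe_countP]; simp
  rw [← this]
  simp [Finset.filter, Finset.card, Multiset.countP_eq_card_filter]

lemma knnVal_small (k : ℕ) (m : ℕ → Bool) (T : Finset ℕ) (h : T.card ≤ k) :
    knnVal k m T = ((T.filter (fun x => m x)).card : ℝ) / k := by
  unfold knnVal
  rw [List.take_of_length_le (by rw [Finset.length_sort]; exact h),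
    (Finset.sort_perm_toList (s := T) (r := (· ≤ ·))).countP_eq, countP_toList]

lemma secondDiff_knn_zero (k : ℕ) (m : ℕ → Bool) (S : Finset ℕ) (i j : ℕ)
    (hi : i ∉ S) (hj : j ∉ S) (hij : i ≠ j) (h : S.card + 2 ≤ k) :
    secondDiff (knnVal k m) S i j = 0 := by
  have hSij : S ∪ {i, j} = insert i (insert j S) := by
    ext x; simp [Finset.mem_insert, or_comm, or_left_comm]
  have hSi : S ∪ {i} = insert i S := by ext x; simp [or_comm]
  have hSj : S ∪ {j} = insert j S := by ext x; simp [or_comm]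
  have hinotins : i ∉ insert j S := by simp [hij, hi]
  have c2 : (insert i (insert j S)).card = S.card + 2 := by
    rw [Finset.card_insert_of_notMem hinotins, Finset.card_insert_of_notMem hj]
  have ci : (insert i S).card = S.card + 1 := Finset.card_insert_of_notMem hi
  have cj : (insert j S).card = S.card + 1 := Finset.card_insert_of_notMem hj
  have key : ∀ (a : ℕ) (T : Finset ℕ), a ∉ T →
      (((insert a T).filter (fun x => m x)).card : ℝ)
        = ((T.filter (fun x => m x)).card : ℝ) + (if m a then 1 else 0) := by
    intro a T ha
    rw [Finset.filter_insert]
    split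
    · rw [Finset.card_insert_of_notMem (fun hmem => ha (Finset.mem_of_mem_filter a hmem))]
      push_cast; ring
    · simp
  rw [secondDiff, hSij, hSi, hSj,
    knnVal_small k m _ (by omega), knnVal_small k m _ (by omega),
    knnVal_small k m _ (by omega), knnVal_small k m S (by omega),
    key i _ hinotins, key j S hj, key i S hi]
  ring

theorem sti_knn_restricted_sum (n k : ℕ) (m : ℕ → Bool) (i j : ℕ)
    (hk : 1 ≤ k) (hkn : k ≤ n)
    (hi : i ∈ Finset.Icc 1 n) (hj : j ∈ Finset.Icc 1 n) (hij : i ≠ j) :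
    sti n (knnVal k m) i j =
      (2 / n) * ∑ s ∈ Finset.Icc (k - 1) (n - 2),
        (1 / ((n - 1).choose s) : ℝ) *
          ∑ S ∈ (Finset.Icc 1 n \ {i, j}).powersetCard s,
            secondDiff (knnVal k m) S i j := by
  simp only [Finset.mem_Icc] at hi hj
  have hn2 : 2 ≤ n := by omega
  have hsub : ({i, j} : Finset ℕ) ⊆ Finset.Icc 1 n := by
    intro x hx
    simp only [Finset.mem_insert, Finset.mem_singleton] at hx
    rcases hx with rfl | rfl <;> simp [Finset.mem_Icc] <;> omega
  have hcard : (Finset.Icc 1 n \ {i, j}).card = n - 2 := by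
    rw [Finset.card_sdiff_of_subset hsub, Finset.card_pair hij, Nat.card_Icc]
    omega
  set A := Finset.Icc 1 n \ {i, j} with hA
  have hiA : ∀ S ∈ A.powerset, i ∉ S ∧ j ∉ S := by
    intro S hS
    rw [Finset.mem_powerset] at hS
    constructor <;> intro hmem <;>
      · have h2 := hS hmem
        rw [hA, Finset.mem_sdiff] at h2
        simp at h2
  rw [sti]
  congr 1
  have G : ∀ s : ℕ, ∑ S ∈ A.powersetCard s,
      (1 / ((n - 1).choose S.card) : ℝ) * secondDiff (knnVal k m) S i j
      = (1 / ((n - 1).choose s) : ℝ) *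
        ∑ S ∈ A.powersetCard s, secondDiff (knnVal k m) S i j := by
    intro s
    rw [Finset.mul_sum]
    refine Finset.sum_congr rfl fun S hS => ?_
    rw [(Finset.mem_powersetCard.mp hS).2]
  calc ∑ S ∈ A.powerset, (1 / ((n - 1).choose S.card) : ℝ) * secondDiff (knnVal k m) S i j
      = ∑ s ∈ Finset.range (n - 2 + 1), ∑ S ∈ A.powersetCard s,
          (1 / ((n - 1).choose S.card) : ℝ) * secondDiff (knnVal k m) S i j := by
        rw [Finset.sum_powerset, hcard]
    _ = ∑ s ∈ Finset.Icc (k - 1) (n - 2), ∑ S ∈ A.powersetCard s,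
          (1 / ((n - 1).choose S.card) : ℝ) * secondDiff (knnVal k m) S i j := by
        refine (Finset.sum_subset ?_ ?_).symm
        · intro s hs
          rw [Finset.mem_Icc] at hs
          rw [Finset.mem_range]
          omega
        · intro s hs hns
          rw [Finset.mem_range] at hs
          rw [Finset.mem_Icc] at hns
          have hsk : s + 2 ≤ k := by omega
          refine Finset.sum_eq_zero fun S hS => ?_
          have hSp : S ∈ A.powerset := Finset.mem_powerset.mpr
            (Finset.mem_powersetCard.mp hS).1
          obtain ⟨hiS, hjS⟩ := hiA S hSp
          rw [secondDiff_knn_zero k m S i j hiS hjS hij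
            (by rw [(Finset.mem_powersetCard.mp hS).2]; exact hsk), mul_zero]
    _ = ∑ s ∈ Finset.Icc (k - 1) (n - 2), (1 / ((n - 1).choose s) : ℝ) *
          ∑ S ∈ A.powersetCard s, secondDiff (knnVal k m) S i j :=
        Finset.sum_congr rfl fun s _ => G s
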